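/- For every k ≥ 1 and P > 1, there exist two groups with demand distributions D₁ (value n₁ with probability p₁, else 0) and D₂ (value n₁² with probability p₁/n₁, else 0) and budget B = n₁ with n₁ > 2kP - 1, such that the ratio of the unconstrained maximum utilization (with budget B) to the utilization of the unique perfectly-fair fractional allocation using budget kB exceeds P. Concretely: p₁n₁ / [(kn₁/(n₁+n₁²))(n₁p₁ + n₁²·(p₁/n₁))] = (1+n₁)/(2k) > P. -/
import Mathlib


/-- For every `k ≥ 1` and `P > 1` there is `n₁ ∈ ℕ` with `n₁ > 2kP - 1` such that for
the two-group instance (group 1: demand `n₁` w.p. `p₁`; group 2: demand `n₁²` w.p.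
`p₁/n₁`) with budget `B = n₁`, the ratio of the unconstrained max utilization `p₁ n₁`
to the utilization of the unique perfectly-fair fractional allocation with budget `kB`,
namely `(k n₁/(n₁+n₁²))(n₁ p₁ + n₁²(p₁/n₁))`, equals `(1+n₁)/(2k)` and exceeds `P`. -/
theorem pof_unbounded_eps_zero (k P : ℝ) (hk : 1 ≤ k) (hP : 1 < P) :
    ∃ n₁ : ℕ, (n₁ : ℝ) > 2 * k * P - 1 ∧
      ∀ p₁ : ℝ, 0 < p₁ → p₁ < 1 →
        p₁ * (n₁ : ℝ) /
          ((k * (n₁ : ℝ) / ((n₁ : ℝ) + (n₁ : ℝ) ^ 2)) *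
            ((n₁ : ℝ) * p₁ + (n₁ : ℝ) ^ 2 * (p₁ / (n₁ : ℝ))))
          = (1 + (n₁ : ℝ)) / (2 * k) ∧
        (1 + (n₁ : ℝ)) / (2 * k) > P := by
  have hkP : (0:ℝ) < 2 * k * P := by positivity
  refine ⟨⌈2 * k * P⌉₊, ?_, ?_⟩
  · have := Nat.le_ceil (2 * k * P)
    linarith
  · intro p₁ hp0 hp1
    set n : ℝ := (⌈2 * k * P⌉₊ : ℝ) with hn
    have hnge : 2 * k * P ≤ n := Nat.le_ceil _
    have hnpos : 0 < n := lt_of_lt_of_le hkP hnge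
    have hk0 : (0:ℝ) < k := by linarith
    constructor
    · field_simp
      ring
    · rw [gt_iff_lt, lt_div_iff₀ (by positivity)]
      nlinarith
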